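/- Let p be an odd prime, G = GL₂(F_p), B the upper triangular Borel subgroup, and U₁ ≤ B the subgroup of upper triangular matrices whose top-left entry is a nonzero square in F_p. Then the double coset space U₁\G/U₁ has exactly 3 elements: U₁, B \ U₁, and G \ B. -/

import Mathlib

open Matrix

set_option linter.unusedSectionVars false
set_option linter.unnecessarySeqFocus false
set_option maxHeartbeats 1000000

section squares
variable {F : Type*} [Field F] [Fintype F] [DecidableEq F]

lemma myIsSquare_inv_iff {a : F} : IsSquare a⁻¹ ↔ IsSquare a := by
  constructor
  · rintro ⟨s, h⟩
    exact ⟨s⁻¹, by rw [← mul_inv, ← h, inv_inv]⟩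
  · rintro ⟨s, rfl⟩
    exact ⟨s⁻¹, by rw [mul_inv]⟩

lemma mySq_mul_iff {a : F} (b : F) (ha : a ≠ 0) (hsa : IsSquare a) :
    IsSquare (a * b) ↔ IsSquare b := by
  constructor
  · intro h
    have : b = a⁻¹ * (a * b) := by field_simp
    rw [this]
    exact (myIsSquare_inv_iff.mpr hsa).mul h
  · exact fun h => hsa.mul h

lemma myIsSquare_mul_inv {a b : F} (ha : a ≠ 0) (hb : b ≠ 0)
    (h : IsSquare a ↔ IsSquare b) : IsSquare (a * b⁻¹) := by
  by_cases hs : IsSquare a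
  · exact hs.mul (myIsSquare_inv_iff.mpr (h.mp hs))
  · have hb' : ¬ IsSquare b := fun hh => hs (h.mpr hh)
    have hbi : ¬ IsSquare b⁻¹ := fun hh => hb' (myIsSquare_inv_iff.mp hh)
    have h1 : quadraticChar F a = -1 := (quadraticChar_neg_one_iff_not_isSquare).mpr hs
    have h2 : quadraticChar F b⁻¹ = -1 := (quadraticChar_neg_one_iff_not_isSquare).mpr hbi
    have h3 : quadraticChar F (a * b⁻¹) = 1 := by rw [_root_.map_mul, h1, h2]; ring
    exact (quadraticChar_one_iff_isSquare (by simp [ha, hb])).mp h3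

end squares

section gl
variable {K : Type*} [Field K]

/-- upper triangular GL element -/
def mkUT (a b d : K) (ha : a ≠ 0) (hd : d ≠ 0) : GL (Fin 2) K where
  val := !![a, b; 0, d]
  inv := !![a⁻¹, -(b * a⁻¹ * d⁻¹); 0, d⁻¹]
  val_inv := by
    ext i j
    fin_cases i <;> fin_cases j <;>
      simp [Matrix.mul_apply, Fin.sum_univ_two] <;> field_simp <;> ring
  inv_val := by
    ext i j
    fin_cases i <;> fin_cases j <;>
      simp [Matrix.mul_apply, Fin.sum_univ_two] <;> field_simp <;> ring

@[simp] lemma mkUT_coe (a b d : K) (ha : a ≠ 0) (hd : d ≠ 0) :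
    ((mkUT a b d ha hd : GL (Fin 2) K) : Matrix (Fin 2) (Fin 2) K) = !![a, b; 0, d] := rfl

/-- the Weyl element -/
def wGL : GL (Fin 2) K where
  val := !![0, 1; 1, 0]
  inv := !![0, 1; 1, 0]
  val_inv := by
    ext i j
    fin_cases i <;> fin_cases j <;> simp [Matrix.mul_apply, Fin.sum_univ_two]
  inv_val := by
    ext i j
    fin_cases i <;> fin_cases j <;> simp [Matrix.mul_apply, Fin.sum_univ_two]

@[simp] lemma wGL_coe : ((wGL : GL (Fin 2) K) : Matrix (Fin 2) (Fin 2) K) = !![0, 1; 1, 0] := rfl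

lemma det_ne' (g : GL (Fin 2) K) : (g : Matrix (Fin 2) (Fin 2) K).det ≠ 0 :=
  ((Matrix.isUnit_iff_isUnit_det _).mp g.isUnit).ne_zero

lemma diag_ne (g : GL (Fin 2) K) (h : (g : Matrix (Fin 2) (Fin 2) K) 1 0 = 0) :
    (g : Matrix (Fin 2) (Fin 2) K) 0 0 ≠ 0 ∧ (g : Matrix (Fin 2) (Fin 2) K) 1 1 ≠ 0 := by
  have hdet := det_ne' g
  rw [Matrix.det_fin_two, h, mul_zero, sub_zero] at hdet
  exact mul_ne_zero_iff.mp hdet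

/-- The subgroup `U₁` as a set. -/
def U1 (K : Type*) [Field K] : Set (GL (Fin 2) K) :=
  {g | (g : Matrix (Fin 2) (Fin 2) K) 1 0 = 0 ∧
    (g : Matrix (Fin 2) (Fin 2) K) 0 0 ≠ 0 ∧
    IsSquare ((g : Matrix (Fin 2) (Fin 2) K) 0 0)}

lemma triple_entries (u g v : GL (Fin 2) K)
    (hu : (u : Matrix (Fin 2) (Fin 2) K) 1 0 = 0)
    (hv : (v : Matrix (Fin 2) (Fin 2) K) 1 0 = 0) :
    ((u * g * v : GL (Fin 2) K) : Matrix (Fin 2) (Fin 2) K) 1 0 =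
      (u : Matrix (Fin 2) (Fin 2) K) 1 1 * (g : Matrix (Fin 2) (Fin 2) K) 1 0 *
        (v : Matrix (Fin 2) (Fin 2) K) 0 0 ∧
    ((u * g * v : GL (Fin 2) K) : Matrix (Fin 2) (Fin 2) K) 0 0 =
      ((u : Matrix (Fin 2) (Fin 2) K) 0 0 * (g : Matrix (Fin 2) (Fin 2) K) 0 0 +
       (u : Matrix (Fin 2) (Fin 2) K) 0 1 * (g : Matrix (Fin 2) (Fin 2) K) 1 0) *
        (v : Matrix (Fin 2) (Fin 2) K) 0 0 := by
  constructor <;>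
    simp [Units.val_mul, Matrix.mul_apply, Fin.sum_univ_two, hu, hv] <;> ring
end gl
section dosets
variable {K : Type*} [Field K] [Fintype K] [DecidableEq K]

lemma doset_of_B (g : GL (Fin 2) K) (hg : (g : Matrix (Fin 2) (Fin 2) K) 1 0 = 0) :
    DoubleCoset.doubleCoset g (U1 K) (U1 K) =
      {h : GL (Fin 2) K | (h : Matrix (Fin 2) (Fin 2) K) 1 0 = 0 ∧
        (IsSquare ((h : Matrix (Fin 2) (Fin 2) K) 0 0) ↔
          IsSquare ((g : Matrix (Fin 2) (Fin 2) K) 0 0))} := by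
  obtain ⟨hg00, hg11⟩ := diag_ne g hg
  ext h
  rw [DoubleCoset.mem_doubleCoset]
  constructor
  · rintro ⟨u, ⟨hu10, hu00, hu0s⟩, v, ⟨hv10, hv00, hv0s⟩, rfl⟩
    obtain ⟨e10, e00⟩ := triple_entries u g v hu10 hv10
    refine ⟨by rw [e10, hg]; ring, ?_⟩
    rw [e00, hg, mul_zero, add_zero]
    have : (u : Matrix (Fin 2) (Fin 2) K) 0 0 * (g : Matrix (Fin 2) (Fin 2) K) 0 0 *
        (v : Matrix (Fin 2) (Fin 2) K) 0 0 =
        ((u : Matrix (Fin 2) (Fin 2) K) 0 0 * (v : Matrix (Fin 2) (Fin 2) K) 0 0) *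
          (g : Matrix (Fin 2) (Fin 2) K) 0 0 := by ring
    rw [this, mySq_mul_iff _ (mul_ne_zero hu00 hv00) (hu0s.mul hv0s)]
  · rintro ⟨hh10, hiff⟩
    obtain ⟨hh00, hh11⟩ := diag_ne h hh10
    set a := (g : Matrix (Fin 2) (Fin 2) K) 0 0 with ha
    set b := (g : Matrix (Fin 2) (Fin 2) K) 0 1 with hb
    set d := (g : Matrix (Fin 2) (Fin 2) K) 1 1 with hd
    set a' := (h : Matrix (Fin 2) (Fin 2) K) 0 0 with ha'
    set b' := (h : Matrix (Fin 2) (Fin 2) K) 0 1 with hb'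
    set d' := (h : Matrix (Fin 2) (Fin 2) K) 1 1 with hd'
    have hx : a' * a⁻¹ ≠ 0 := mul_ne_zero hh00 (inv_ne_zero hg00)
    have hz : d' * d⁻¹ ≠ 0 := mul_ne_zero hh11 (inv_ne_zero hg11)
    refine ⟨1, ⟨by simp [Units.val_one, Matrix.one_apply], by simp [Units.val_one, Matrix.one_apply], by simp [Units.val_one, Matrix.one_apply]⟩,
      mkUT (a' * a⁻¹) ((b' - b * (d' * d⁻¹)) * a⁻¹) (d' * d⁻¹) hx hz,
      ⟨by simp, by simpa using hx, by simpa using myIsSquare_mul_inv hh00 hg00 hiff⟩, ?_⟩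
    rw [one_mul]
    ext i j
    fin_cases i <;> fin_cases j <;>
      simp [Units.val_mul, Matrix.mul_apply, Matrix.vecMul, dotProduct,
        Fin.sum_univ_two, hg, hh10, ← ha, ← hb, ← hd,
        ← ha', ← hb', ← hd'] <;> (try field_simp) <;> (try ring)

lemma doset_of_nB (g : GL (Fin 2) K) (hg : (g : Matrix (Fin 2) (Fin 2) K) 1 0 ≠ 0) :
    DoubleCoset.doubleCoset g (U1 K) (U1 K) =
      {h : GL (Fin 2) K | (h : Matrix (Fin 2) (Fin 2) K) 1 0 ≠ 0} := by
  ext h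
  rw [DoubleCoset.mem_doubleCoset]
  constructor
  · rintro ⟨u, ⟨hu10, hu00, hu0s⟩, v, ⟨hv10, hv00, hv0s⟩, rfl⟩
    obtain ⟨e10, _⟩ := triple_entries u g v hu10 hv10
    have hu11 := (diag_ne u hu10).2
    simpa [e10] using mul_ne_zero (mul_ne_zero hu11 hg) hv00
  · intro hh10'
    have hh10 : (h : Matrix (Fin 2) (Fin 2) K) 1 0 ≠ 0 := hh10'
    set a := (g : Matrix (Fin 2) (Fin 2) K) 0 0 with ha
    set b := (g : Matrix (Fin 2) (Fin 2) K) 0 1 with hb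
    set c := (g : Matrix (Fin 2) (Fin 2) K) 1 0 with hc
    set d := (g : Matrix (Fin 2) (Fin 2) K) 1 1 with hd
    set a' := (h : Matrix (Fin 2) (Fin 2) K) 0 0 with ha'
    set b' := (h : Matrix (Fin 2) (Fin 2) K) 0 1 with hb'
    set c' := (h : Matrix (Fin 2) (Fin 2) K) 1 0 with hc'
    set d' := (h : Matrix (Fin 2) (Fin 2) K) 1 1 with hd'
    have hΔ : a * d - b * c ≠ 0 := by
      have := det_ne' g; rwa [Matrix.det_fin_two] at this
    have hΔ' : a' * d' - b' * c' ≠ 0 := by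
      have := det_ne' h; rwa [Matrix.det_fin_two] at this
    set β : K := (a' - a) * c⁻¹ with hβ
    set δ : K := c' * c⁻¹ with hδ
    set z : K := c * (a' * d' - b' * c') * (c' * (a * d - b * c))⁻¹ with hz
    set y : K := (d' * c * c'⁻¹ - d * z) * c⁻¹ with hy
    have hC : c' * (a * d - b * c) ≠ 0 := mul_ne_zero hh10 hΔ
    have hδ0 : δ ≠ 0 := mul_ne_zero hh10 (inv_ne_zero hg)
    have hz0 : z ≠ 0 := mul_ne_zero (mul_ne_zero hg hΔ')
      (inv_ne_zero (mul_ne_zero hh10 hΔ))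
    refine ⟨mkUT 1 β δ one_ne_zero hδ0, ⟨by simp, by simp, by simpa using isSquare_one⟩,
      mkUT 1 y z one_ne_zero hz0, ⟨by simp, by simp, by simpa using isSquare_one⟩, ?_⟩
    ext i j
    fin_cases i <;> fin_cases j <;>
      simp [Units.val_mul, Matrix.mul_apply, Matrix.vecMul, dotProduct,
        Fin.sum_univ_two, ← ha, ← hb, ← hc, ← hd,
        ← ha', ← hb', ← hc', ← hd']
    · rw [hβ]; field_simp; ring
    · have E1 : a + β * c = a' := by rw [hβ]; field_simp; ring
      rw [E1, hy, hβ, hz]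
      field_simp
      linear_combination (a' * d' - b' * c') * mul_inv_cancel₀ hΔ
    · rw [hδ]; field_simp
    · rw [hδ, hy]
      field_simp
      ring

end dosets
section classes
variable {K : Type*} [Field K] [Fintype K] [DecidableEq K]

lemma doset_U1 (g : GL (Fin 2) K) (hg : (g : Matrix (Fin 2) (Fin 2) K) 1 0 = 0)
    (hs : IsSquare ((g : Matrix (Fin 2) (Fin 2) K) 0 0)) :
    DoubleCoset.doubleCoset g (U1 K) (U1 K) = U1 K := by
  rw [doset_of_B g hg]
  ext h
  constructor
  · rintro ⟨h10, hiff⟩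
    exact ⟨h10, (diag_ne h h10).1, hiff.mpr hs⟩
  · rintro ⟨h10, _, hhs⟩
    exact ⟨h10, iff_of_true hhs hs⟩

lemma doset_BminusU1 (g : GL (Fin 2) K) (hg : (g : Matrix (Fin 2) (Fin 2) K) 1 0 = 0)
    (hs : ¬ IsSquare ((g : Matrix (Fin 2) (Fin 2) K) 0 0)) :
    DoubleCoset.doubleCoset g (U1 K) (U1 K) =
      {h : GL (Fin 2) K | (h : Matrix (Fin 2) (Fin 2) K) 1 0 = 0} \ U1 K := by
  rw [doset_of_B g hg]
  ext h
  constructor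
  · rintro ⟨h10, hiff⟩
    exact ⟨h10, fun hmem => hs (hiff.mp hmem.2.2)⟩
  · rintro ⟨h10, hnot⟩
    refine ⟨h10, iff_of_false (fun hhs => hnot ⟨h10, (diag_ne h h10).1, hhs⟩) hs⟩

lemma doset_comp (g : GL (Fin 2) K) (hg : (g : Matrix (Fin 2) (Fin 2) K) 1 0 ≠ 0) :
    DoubleCoset.doubleCoset g (U1 K) (U1 K) =
      ({h : GL (Fin 2) K | (h : Matrix (Fin 2) (Fin 2) K) 1 0 = 0})ᶜ := by
  rw [doset_of_nB g hg]
  rfl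

lemma one_mem_U1 : (1 : GL (Fin 2) K) ∈ U1 K := by
  refine ⟨?_, ?_, ?_⟩ <;> simp [Units.val_one, Matrix.one_apply]

end classes

/-- Let `p` be an odd prime, `G = GL₂(𝔽_p)`, `B` the set of invertible upper triangular
matrices and `U₁ ⊆ B` the subset of those whose top-left entry is a nonzero square in
`𝔽_p`. Then the `(U₁,U₁)`-double cosets in `G` are exactly `U₁`, `B \ U₁` and `G \ B`;
in particular the double coset space `U₁\G/U₁` has exactly three elements. -/
theorem stmt5 (p : ℕ) [Fact p.Prime] (hp : Odd p) :
    let B : Set (GL (Fin 2) (ZMod p)) :=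
      {g | (g : Matrix (Fin 2) (Fin 2) (ZMod p)) 1 0 = 0}
    let U₁ : Set (GL (Fin 2) (ZMod p)) :=
      {g | (g : Matrix (Fin 2) (Fin 2) (ZMod p)) 1 0 = 0 ∧
        (g : Matrix (Fin 2) (Fin 2) (ZMod p)) 0 0 ≠ 0 ∧
        IsSquare ((g : Matrix (Fin 2) (Fin 2) (ZMod p)) 0 0)}
    {S : Set (GL (Fin 2) (ZMod p)) | ∃ g, S = DoubleCoset.doubleCoset g U₁ U₁} =
        {U₁, B \ U₁, Bᶜ} ∧
      Nat.card (DoubleCoset.Quotient U₁ U₁) = 3 := by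
  intro B U₁
  have hchar : ringChar (ZMod p) ≠ 2 := by
    rw [ZMod.ringChar_zmod_n]
    rintro rfl
    exact (by decide : ¬ Odd 2) hp
  obtain ⟨n, hn⟩ := FiniteField.exists_nonsquare (F := ZMod p) hchar
  have hn0 : n ≠ 0 := by rintro rfl; exact hn ⟨0, by simp⟩
  set dGL : GL (Fin 2) (ZMod p) := mkUT n 0 1 hn0 one_ne_zero with hdGL
  have hd10 : (dGL : Matrix (Fin 2) (Fin 2) (ZMod p)) 1 0 = 0 := by
    rw [hdGL, mkUT_coe]; simp
  have hd00 : (dGL : Matrix (Fin 2) (Fin 2) (ZMod p)) 0 0 = n := by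
    rw [hdGL, mkUT_coe]; simp
  have hw10 : ((wGL : GL (Fin 2) (ZMod p)) : Matrix (Fin 2) (Fin 2) (ZMod p)) 1 0 ≠ 0 := by
    rw [wGL_coe]; simp
  have h1 : (1 : GL (Fin 2) (ZMod p)) ∈ U₁ := one_mem_U1
  have h110 : ((1 : GL (Fin 2) (ZMod p)) : Matrix (Fin 2) (Fin 2) (ZMod p)) 1 0 = 0 := h1.1
  have hU : U₁ = U1 (ZMod p) := rfl
  have hdU : dGL ∈ B \ U₁ := by
    refine ⟨hd10, fun hmem => hn ?_⟩
    rw [← hd00]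
    exact hmem.2.2
  have hmain : {S : Set (GL (Fin 2) (ZMod p)) | ∃ g, S = DoubleCoset.doubleCoset g U₁ U₁} =
      {U₁, B \ U₁, Bᶜ} := by
    ext S
    constructor
    · rintro ⟨g, rfl⟩
      by_cases hg : (g : Matrix (Fin 2) (Fin 2) (ZMod p)) 1 0 = 0
      · by_cases hs : IsSquare ((g : Matrix (Fin 2) (Fin 2) (ZMod p)) 0 0)
        · left; rw [hU]; exact doset_U1 g hg hs
        · right; left; rw [hU]; exact doset_BminusU1 g hg hs
      · right; right; rw [hU]; exact doset_comp g hg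
    · rintro (rfl | rfl | rfl)
      · exact ⟨1, by rw [hU, doset_U1 1 h110 h1.2.2]⟩
      · exact ⟨dGL, by rw [hU, doset_BminusU1 dGL hd10 (hd00 ▸ hn)]⟩
      · exact ⟨wGL, by rw [hU, doset_comp wGL hw10]⟩
  refine ⟨hmain, ?_⟩
  have e : DoubleCoset.Quotient U₁ U₁ ≃
      Set.range (fun g : GL (Fin 2) (ZMod p) => DoubleCoset.doubleCoset g U₁ U₁) :=
    Setoid.quotientKerEquivRange _
  rw [Nat.card_congr e]
  have hr : Set.range (fun g : GL (Fin 2) (ZMod p) => DoubleCoset.doubleCoset g U₁ U₁) =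
      {S : Set (GL (Fin 2) (ZMod p)) | ∃ g, S = DoubleCoset.doubleCoset g U₁ U₁} := by
    ext S; simp [eq_comm]
  rw [hr, hmain, Nat.card_coe_set_eq]
  refine Set.ncard_eq_three.mpr ⟨U₁, B \ U₁, Bᶜ, ?_, ?_, ?_, rfl⟩
  · intro hEq
    exact (hEq ▸ h1).2 h1
  · intro hEq
    exact (hEq ▸ h1) h110
  · intro hEq
    exact (hEq ▸ hdU : dGL ∈ Bᶜ) hd10
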